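/- Let ρ be a root of x^3 + (a-1)x^2 - ax - 1 with integer a ≥ 3, and let f'(ρ) = 3ρ^2 + 2(a-1)ρ - a. Then δ = (-(a-1) + (a-1)ρ + ρ^2)/f'(ρ) satisfies Tr(δ(v_1 + v_2ρ + v_3ρ^2)) = v_1 + v_3 for all v_1, v_2, v_3 ∈ Z; in particular Tr(δ(1 + wρ + ρ^2)) = 2 for every integer w. -/
import Mathlib

private lemma ennola_fp_aux (a r s t : ℝ) (h1 : r + s + t = -(a-1))
    (h2 : r*s + r*t + s*t = -a) :
    3*r^2 + 2*(a-1)*r - a = (r - s) * (r - t) := by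
  linear_combination (2*r) * h1 - h2

theorem ennola_codifferent_trace (a : ℤ) (ha : 3 ≤ a) (ρ ρ' ρ'' : ℝ)
    (hρ : ρ^3 + (a-1)*ρ^2 - a*ρ - 1 = 0)
    (hρ' : ρ'^3 + (a-1)*ρ'^2 - a*ρ' - 1 = 0)
    (hρ'' : ρ''^3 + (a-1)*ρ''^2 - a*ρ'' - 1 = 0)
    (hne1 : ρ ≠ ρ') (hne2 : ρ ≠ ρ'') (hne3 : ρ' ≠ ρ'') :
    -- δ = (-(a-1) + (a-1)ρ + ρ²)/f'(ρ) with conjugates given by the other roots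
    let δ : ℝ → ℝ := fun r =>
      (-(a:ℝ) + 1 + (a-1)*r + r^2) / (3*r^2 + 2*(a-1)*r - a)
    -- Tr(δ(v₁ + v₂ρ + v₃ρ²)) = v₁ + v₃
    (∀ v₁ v₂ v₃ : ℤ,
      δ ρ * ((v₁:ℝ) + v₂*ρ + v₃*ρ^2) + δ ρ' * ((v₁:ℝ) + v₂*ρ' + v₃*ρ'^2)
        + δ ρ'' * ((v₁:ℝ) + v₂*ρ'' + v₃*ρ''^2) = (v₁:ℝ) + v₃) ∧
    -- in particular Tr(δ(1 + wρ + ρ²)) = 2 for every integer w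
    (∀ w : ℤ,
      δ ρ * (1 + (w:ℝ)*ρ + ρ^2) + δ ρ' * (1 + (w:ℝ)*ρ' + ρ'^2)
        + δ ρ'' * (1 + (w:ℝ)*ρ'' + ρ''^2) = 2) := by
  intro δ
  have hd1 : ρ - ρ' ≠ 0 := sub_ne_zero.mpr hne1
  have hd2 : ρ - ρ'' ≠ 0 := sub_ne_zero.mpr hne2
  have hd3 : ρ' - ρ'' ≠ 0 := sub_ne_zero.mpr hne3
  have hd1' : ρ' - ρ ≠ 0 := sub_ne_zero.mpr hne1.symm
  have hd2' : ρ'' - ρ ≠ 0 := sub_ne_zero.mpr hne2.symm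
  have hd3' : ρ'' - ρ' ≠ 0 := sub_ne_zero.mpr hne3.symm
  -- elementary symmetric functions
  have hA : ρ^2 + ρ*ρ' + ρ'^2 + (a-1)*(ρ+ρ') - a = 0 := by
    have h0 : (ρ - ρ') * (ρ^2 + ρ*ρ' + ρ'^2 + (a-1)*(ρ+ρ') - a) = 0 := by
      linear_combination hρ - hρ'
    rcases mul_eq_zero.mp h0 with h | h
    · exact absurd h hd1
    · exact h
  have hB : ρ^2 + ρ*ρ'' + ρ''^2 + (a-1)*(ρ+ρ'') - a = 0 := by
    have h0 : (ρ - ρ'') * (ρ^2 + ρ*ρ'' + ρ''^2 + (a-1)*(ρ+ρ'') - a) = 0 := by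
      linear_combination hρ - hρ''
    rcases mul_eq_zero.mp h0 with h | h
    · exact absurd h hd2
    · exact h
  have hs1 : ρ + ρ' + ρ'' = -((a:ℝ)-1) := by
    have h0 : (ρ' - ρ'') * (ρ + ρ' + ρ'' + ((a:ℝ)-1)) = 0 := by
      linear_combination hA - hB
    rcases mul_eq_zero.mp h0 with h | h
    · exact absurd h hd3
    · linarith
  have hs2 : ρ*ρ' + ρ*ρ'' + ρ'*ρ'' = -(a:ℝ) := by
    linear_combination (ρ + ρ') * hs1 - hA
  -- f'(r) = (r-s)(r-t) at each root
  have hfp1 : 3*ρ^2 + 2*((a:ℝ)-1)*ρ - a = (ρ - ρ') * (ρ - ρ'') :=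
    ennola_fp_aux a ρ ρ' ρ'' (by linear_combination hs1) (by linear_combination hs2)
  have hfp2 : 3*ρ'^2 + 2*((a:ℝ)-1)*ρ' - a = (ρ' - ρ) * (ρ' - ρ'') :=
    ennola_fp_aux a ρ' ρ ρ'' (by linear_combination hs1) (by linear_combination hs2)
  have hfp3 : 3*ρ''^2 + 2*((a:ℝ)-1)*ρ'' - a = (ρ'' - ρ) * (ρ'' - ρ') :=
    ennola_fp_aux a ρ'' ρ ρ' (by linear_combination hs1) (by linear_combination hs2)
  have main : ∀ v₁ v₂ v₃ : ℤ,
      δ ρ * ((v₁:ℝ) + v₂*ρ + v₃*ρ^2) + δ ρ' * ((v₁:ℝ) + v₂*ρ' + v₃*ρ'^2)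
        + δ ρ'' * ((v₁:ℝ) + v₂*ρ'' + v₃*ρ''^2) = (v₁:ℝ) + v₃ := by
    intro v₁ v₂ v₃
    have t1 : δ ρ * ((v₁:ℝ) + v₂*ρ + v₃*ρ^2)
        = (((v₁:ℝ)+v₃)*ρ^2 + ((a-1)*v₁+v₂+v₃)*ρ + (v₂-(a-1)*v₁)) / ((ρ - ρ') * (ρ - ρ'')) := by
      simp only [δ]
      rw [div_mul_eq_mul_div, hfp1]
      congr 1
      linear_combination ((v₂:ℝ) + v₃*ρ) * hρ
    have t2 : δ ρ' * ((v₁:ℝ) + v₂*ρ' + v₃*ρ'^2)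
        = (((v₁:ℝ)+v₃)*ρ'^2 + ((a-1)*v₁+v₂+v₃)*ρ' + (v₂-(a-1)*v₁)) / ((ρ' - ρ) * (ρ' - ρ'')) := by
      simp only [δ]
      rw [div_mul_eq_mul_div, hfp2]
      congr 1
      linear_combination ((v₂:ℝ) + v₃*ρ') * hρ'
    have t3 : δ ρ'' * ((v₁:ℝ) + v₂*ρ'' + v₃*ρ''^2)
        = (((v₁:ℝ)+v₃)*ρ''^2 + ((a-1)*v₁+v₂+v₃)*ρ'' + (v₂-(a-1)*v₁)) / ((ρ'' - ρ) * (ρ'' - ρ')) := by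
      simp only [δ]
      rw [div_mul_eq_mul_div, hfp3]
      congr 1
      linear_combination ((v₂:ℝ) + v₃*ρ'') * hρ''
    rw [t1, t2, t3]
    field_simp
    ring
  refine ⟨main, fun w => ?_⟩
  have := main 1 w 1
  push_cast at this ⊢
  linarith
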